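/- arXiv:1811.10768 — 4 statements merged into one kernel-verified Lean document; each statement's English description precedes it below -/
import Mathlib

section
/- Let n ≥ 3 and let V ∈ RH_q(ℝⁿ) with q ∈ (n/2, ∞). Then there exists a constant C > 0 such that for every x ∈ ℝⁿ and all radii 0 < r < R < ∞ one has (1/r^{n−2}) ∫_{B(x,r)} V(y) dy ≤ C (R/r)^{n/q − 2} (1/R^{n−2}) ∫_{B(x,R)} V(y) dy. -/
open MeasureTheory Metric ENNReal

noncomputable section

/-- Euclidean space `ℝⁿ`. -/
abbrev E (n : ℕ) := EuclideanSpace ℝ (Fin n)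

/-- `V` is a nonnegative function belonging to the reverse Hölder class `RH_q(ℝⁿ)`:
`V ∈ L^q_loc` and there is `C > 0` such that for every ball `B`,
`((1/|B|) ∫_B V^q)^(1/q) ≤ C (1/|B|) ∫_B V`. -/
def IsRH (n : ℕ) (q : ℝ) (V : E n → ℝ) : Prop :=
  (∀ x, 0 ≤ V x) ∧ Measurable V ∧
    (∀ (x : E n) (r : ℝ), 0 < r → IntegrableOn V (ball x r) volume) ∧
    (∀ (x : E n) (r : ℝ), 0 < r → IntegrableOn (fun y => V y ^ q) (ball x r) volume) ∧
    ∃ C > 0, ∀ (x : E n) (r : ℝ), 0 < r →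
      ((volume (ball x r)).toReal⁻¹ * ∫ y in ball x r, V y ^ q) ^ (1 / q) ≤
        C * ((volume (ball x r)).toReal⁻¹ * ∫ y in ball x r, V y)

/-- If `n ≥ 3` and `V ∈ RH_q(ℝⁿ)` with `q ∈ (n/2, ∞)`, then there exists `C > 0` such that
for every `x ∈ ℝⁿ` and all `0 < r < R < ∞`,
`(1/r^(n-2)) ∫_{B(x,r)} V ≤ C (R/r)^(n/q-2) (1/R^(n-2)) ∫_{B(x,R)} V`. -/
theorem stmt0 (n : ℕ) (hn : 3 ≤ n) (q : ℝ) (hq : (n : ℝ) / 2 < q)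
    (V : E n → ℝ) (hV : IsRH n q V) :
    ∃ C > 0, ∀ (x : E n) (r R : ℝ), 0 < r → r < R →
      (1 / r ^ ((n : ℝ) - 2)) * ∫ y in ball x r, V y ≤
        C * (R / r) ^ ((n : ℝ) / q - 2) *
          ((1 / R ^ ((n : ℝ) - 2)) * ∫ y in ball x R, V y) := by
  obtain ⟨hV0, hVm, hVint, hVqint, C, hC, hRH⟩ := hV
  haveI : Nonempty (Fin n) := ⟨⟨0, by omega⟩⟩
  haveI : Nontrivial (E n) := inferInstance
  have hn3 : (3:ℝ) ≤ (n:ℝ) := by exact_mod_cast hn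
  have hq1 : 1 < q := by linarith
  have hq0 : 0 < q := by linarith
  have hpq : q.HolderConjugate (q / (q - 1)) := Real.HolderConjugate.conjExponent hq1
  set q' := q / (q - 1) with hq'def
  have hq'inv : 1 / q' = 1 - 1 / q := by
    have h := hpq.inv_add_inv_eq_one
    rw [one_div, one_div]; linarith [h]
  refine ⟨C, hC, fun x r R hr hrR => ?_⟩
  have hR : 0 < R := hr.trans hrR
  set Ir := ∫ y in ball x r, V y with hIr
  set IR := ∫ y in ball x R, V y with hIR
  set Jr := ∫ y in ball x r, V y ^ q with hJr
  set JR := ∫ y in ball x R, V y ^ q with hJR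
  have hIRnn : 0 ≤ IR := setIntegral_nonneg measurableSet_ball fun y _ => hV0 y
  have hJrnn : 0 ≤ Jr := setIntegral_nonneg measurableSet_ball fun y _ =>
    Real.rpow_nonneg (hV0 y) q
  have hJRnn : 0 ≤ JR := setIntegral_nonneg measurableSet_ball fun y _ =>
    Real.rpow_nonneg (hV0 y) q
  set mr := (volume (ball x r)).toReal with hmr
  set mR := (volume (ball x R)).toReal with hmR
  have hmrpos : 0 < mr := ENNReal.toReal_pos (measure_ball_pos volume x hr).ne'
    measure_ball_lt_top.ne
  have hmRpos : 0 < mR := ENNReal.toReal_pos (measure_ball_pos volume x hR).ne'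
    measure_ball_lt_top.ne
  -- Hölder on the small ball
  haveI : IsFiniteMeasure (volume.restrict (ball x r)) :=
    ⟨by rw [Measure.restrict_apply_univ]; exact measure_ball_lt_top⟩
  have hVsm : AEStronglyMeasurable V (volume.restrict (ball x r)) :=
    hVm.aestronglyMeasurable
  have h1 : MemLp V (ENNReal.ofReal q) (volume.restrict (ball x r)) := by
    have hi : Integrable (fun y => ‖V y‖ ^ (ENNReal.ofReal q).toReal)
        (volume.restrict (ball x r)) := by
      rw [ENNReal.toReal_ofReal hq0.le]
      exact (hVqint x r hr).congr (ae_of_all _ fun y => by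
        simp [Real.norm_eq_abs, abs_of_nonneg (hV0 y)])
    have h2 := (memLp_norm_rpow_iff (p := ENNReal.ofReal q) hVsm
      ((ENNReal.ofReal_pos.2 hq0).ne') ENNReal.ofReal_ne_top).1
    rw [ENNReal.div_self ((ENNReal.ofReal_pos.2 hq0).ne') ENNReal.ofReal_ne_top] at h2
    exact h2 (memLp_one_iff_integrable.mpr hi)
  have h2 : MemLp (fun _ : E n => (1:ℝ)) (ENNReal.ofReal q')
      (volume.restrict (ball x r)) := memLp_const 1
  have holder : Ir ≤ Jr ^ (1/q) * mr ^ (1/q') := by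
    have h := integral_mul_le_Lp_mul_Lq_of_nonneg hpq
      (ae_of_all _ hV0) (ae_of_all _ fun _ => zero_le_one) h1 h2
    simpa [mul_one, Real.one_rpow, integral_const, Measure.restrict_apply_univ,
      smul_eq_mul, measureReal_def, ← hIr, ← hJr, ← hmr] using h
  -- monotonicity of the integral of V^q
  have hmono : Jr ≤ JR := setIntegral_mono_set (hVqint x R hR)
    (ae_of_all _ fun y => Real.rpow_nonneg (hV0 y) q)
    (HasSubset.Subset.eventuallyLE (ball_subset_ball hrR.le))
  -- reverse Hölder on the big ball
  have hrh := hRH x R hR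
  have hJRq : JR ^ (1/q) ≤ mR ^ (1/q) * (C * (mR⁻¹ * IR)) := by
    have hJReq : JR = mR * (mR⁻¹ * JR) := by
      field_simp
    calc JR ^ (1/q) = (mR * (mR⁻¹ * JR)) ^ (1/q) := by rw [← hJReq]
      _ = mR ^ (1/q) * (mR⁻¹ * JR) ^ (1/q) := by
          rw [Real.mul_rpow hmRpos.le (by positivity)]
      _ ≤ mR ^ (1/q) * (C * (mR⁻¹ * IR)) := by
          apply mul_le_mul_of_nonneg_left hrh (by positivity)
  -- key estimate
  have key : Ir ≤ C * (r / R) ^ ((n:ℝ) - (n:ℝ)/q) * IR := by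
    have step1 : Ir ≤ (mR ^ (1/q) * (C * (mR⁻¹ * IR))) * mr ^ (1/q') := by
      calc Ir ≤ Jr ^ (1/q) * mr ^ (1/q') := holder
        _ ≤ JR ^ (1/q) * mr ^ (1/q') := by
            apply mul_le_mul_of_nonneg_right
              (Real.rpow_le_rpow hJrnn hmono (by positivity)) (by positivity)
        _ ≤ _ := mul_le_mul_of_nonneg_right hJRq (by positivity)
    have hcoef : mR ^ (1/q) * mR⁻¹ * mr ^ (1/q') = (r/R) ^ ((n:ℝ) - (n:ℝ)/q) := by
      have hratio : mr / mR = (r/R) ^ (n:ℕ) := by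
        rw [hmr, hmR, Measure.addHaar_ball volume x hr.le,
          Measure.addHaar_ball volume x hR.le, ENNReal.toReal_mul, ENNReal.toReal_mul,
          ENNReal.toReal_ofReal (by positivity), ENNReal.toReal_ofReal (by positivity),
          finrank_euclideanSpace, Fintype.card_fin]
        rw [div_pow]
        have hcpos : 0 < (volume (ball (0 : E n) 1)).toReal :=
          ENNReal.toReal_pos (measure_ball_pos volume _ one_pos).ne'
            measure_ball_lt_top.ne
        field_simp
      have : mR ^ (1/q) * mR⁻¹ * mr ^ (1/q') = (mr / mR) ^ (1/q') := by
        rw [Real.div_rpow hmrpos.le hmRpos.le]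
        rw [show mR ^ (1/q) * mR⁻¹ = mR ^ (1/q - 1) by
          rw [Real.rpow_sub hmRpos, Real.rpow_one]; ring]
        rw [show (1:ℝ)/q - 1 = -(1/q') by rw [hq'inv]; ring,
          Real.rpow_neg hmRpos.le, div_eq_mul_inv]
        ring
      rw [this, hratio, ← Real.rpow_natCast (r/R) n,
        ← Real.rpow_mul (by positivity)]
      congr 1
      rw [hq'inv]; ring
    calc Ir ≤ (mR ^ (1/q) * (C * (mR⁻¹ * IR))) * mr ^ (1/q') := step1
      _ = C * (mR ^ (1/q) * mR⁻¹ * mr ^ (1/q')) * IR := by ring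
      _ = C * (r/R) ^ ((n:ℝ) - (n:ℝ)/q) * IR := by rw [hcoef]
  -- conclude
  have hcoef2 : (1 / r ^ ((n:ℝ) - 2)) * (r / R) ^ ((n:ℝ) - (n:ℝ)/q)
      = (R / r) ^ ((n:ℝ)/q - 2) * (1 / R ^ ((n:ℝ) - 2)) := by
    simp only [Real.rpow_def_of_pos hr, Real.rpow_def_of_pos hR,
      Real.rpow_def_of_pos (div_pos hr hR), Real.rpow_def_of_pos (div_pos hR hr),
      Real.log_div hr.ne' hR.ne', Real.log_div hR.ne' hr.ne', one_div,
      ← Real.exp_neg, ← Real.exp_add]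
    congr 1
    ring
  calc (1 / r ^ ((n:ℝ) - 2)) * Ir
      ≤ (1 / r ^ ((n:ℝ) - 2)) * (C * (r/R) ^ ((n:ℝ) - (n:ℝ)/q) * IR) :=
        mul_le_mul_of_nonneg_left key (by positivity)
    _ = C * (R / r) ^ ((n:ℝ)/q - 2) * ((1 / R ^ ((n:ℝ) - 2)) * IR) := by
        linear_combination (C * IR) * hcoef2

end
end

section
/- Let n ≥ 3 and let V ∈ RH_q(ℝⁿ) with q ∈ (n/2, ∞), V not almost everywhere zero. Then there exist positive constants C and k₀ such that for every x ∈ ℝⁿ and every R ∈ (0,∞) with R·m(x,V) ≥ 1, one has (1/R^{n−2}) ∫_{B(x,R)} V(y) dy ≤ C (R·m(x,V))^{k₀}. -/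
open MeasureTheory Metric ENNReal

noncomputable section

/-- The set `{ r > 0 : r^(2-n) ∫_{B(x,r)} V ≤ 1 }` entering the definition of the
auxiliary function `m(·, V)`. -/
def auxSet (n : ℕ) (V : E n → ℝ) (x : E n) : Set ℝ :=
  {r : ℝ | 0 < r ∧ r ^ ((2 : ℝ) - n) * ∫ y in ball x r, V y ≤ 1}

/-- Shen's auxiliary function `m(x, V)`, defined by `1/m(x,V) = sup auxSet`. -/
def auxm (n : ℕ) (V : E n → ℝ) (x : E n) : ℝ := (sSup (auxSet n V x))⁻¹

/-- Hölder + reverse Hölder estimate for the integral of `V` over a subset of a ball. -/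
lemma subset_est (n : ℕ) (q : ℝ) (hq1 : 1 < q) (V : E n → ℝ)
    (hpos : ∀ x, 0 ≤ V x) (hmeas : Measurable V)
    (hint : ∀ (x : E n) (r : ℝ), 0 < r → IntegrableOn V (ball x r) volume)
    (hqint : ∀ (x : E n) (r : ℝ), 0 < r → IntegrableOn (fun y => V y ^ q) (ball x r) volume)
    (C : ℝ)
    (hRH : ∀ (x : E n) (r : ℝ), 0 < r →
      ((volume (ball x r)).toReal⁻¹ * ∫ y in ball x r, V y ^ q) ^ (1 / q) ≤
        C * ((volume (ball x r)).toReal⁻¹ * ∫ y in ball x r, V y))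
    (x : E n) (r : ℝ) (hr : 0 < r) (S : Set (E n)) (hSm : MeasurableSet S)
    (hSs : S ⊆ ball x r) :
    ∫ y in S, V y ≤ C * ((volume S).toReal ^ (1 - 1 / q)) *
      ((volume (ball x r)).toReal ^ (1 / q - (1:ℝ))) * ∫ y in ball x r, V y := by
  have hq0 : 0 < q := lt_trans one_pos hq1
  have hb_pos : 0 < (volume (ball x r)).toReal :=
    ENNReal.toReal_pos (measure_ball_pos volume x hr).ne' measure_ball_lt_top.ne
  have hVS : IntegrableOn V S volume := (hint x r hr).mono_set hSs
  have hVqS : IntegrableOn (fun y => V y ^ q) S volume := (hqint x r hr).mono_set hSs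
  haveI : IsFiniteMeasure (volume.restrict S) :=
    ⟨by rw [Measure.restrict_apply_univ]
        exact lt_of_le_of_lt (measure_mono hSs) measure_ball_lt_top⟩
  have hpq : q.HolderConjugate q.conjExponent := Real.HolderConjugate.conjExponent hq1
  have hqne0 : ENNReal.ofReal q ≠ 0 := by
    simp [ENNReal.ofReal_eq_zero, not_le, hq0]
  have hmem : MemLp V (ENNReal.ofReal q) (volume.restrict S) := by
    rw [← memLp_norm_rpow_iff hmeas.aestronglyMeasurable hqne0 ENNReal.ofReal_ne_top]
    rw [ENNReal.div_self hqne0 ENNReal.ofReal_ne_top]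
    rw [memLp_one_iff_integrable]
    have : (fun y => ‖V y‖ ^ (ENNReal.ofReal q).toReal) = fun y => V y ^ q := by
      funext y
      rw [Real.norm_of_nonneg (hpos y), ENNReal.toReal_ofReal hq0.le]
    rw [this]
    exact hVqS
  have hone : MemLp (fun _ : E n => (1:ℝ)) (ENNReal.ofReal q.conjExponent)
      (volume.restrict S) := memLp_const 1
  have hold := integral_mul_le_Lp_mul_Lq_of_nonneg hpq
    (Filter.Eventually.of_forall fun y => hpos y)
    (Filter.Eventually.of_forall fun _ => zero_le_one) hmem hone
  simp only [mul_one, Real.one_rpow] at hold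
  rw [integral_const] at hold
  rw [Measure.real, Measure.restrict_apply_univ] at hold
  simp only [smul_eq_mul, mul_one] at hold
  have hconj : 1 / q.conjExponent = 1 - 1 / q := by
    have := hpq.inv_add_inv_eq_one
    rw [one_div, one_div]
    linarith
  rw [hconj] at hold
  have hq_int_nonneg : 0 ≤ ∫ y in S, V y ^ q :=
    setIntegral_nonneg hSm fun y _ => Real.rpow_nonneg (hpos y) q
  have hmono : (∫ y in S, V y ^ q) ≤ ∫ y in ball x r, V y ^ q := by
    apply setIntegral_mono_set (hqint x r hr)
      (Filter.Eventually.of_forall fun y => Real.rpow_nonneg (hpos y) q)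
      (HasSubset.Subset.eventuallyLE hSs)
  have hstep1 : (∫ y in S, V y ^ q) ^ (1/q) ≤ (∫ y in ball x r, V y ^ q) ^ (1/q) :=
    Real.rpow_le_rpow hq_int_nonneg hmono (by positivity)
  set b := (volume (ball x r)).toReal with hb
  have hIq_nonneg : 0 ≤ ∫ y in ball x r, V y ^ q :=
    setIntegral_nonneg measurableSet_ball fun y _ => Real.rpow_nonneg (hpos y) q
  have hRHx := hRH x r hr
  have hsplit : (∫ y in ball x r, V y ^ q) ^ (1/q)
      = b ^ (1/q : ℝ) * (b⁻¹ * ∫ y in ball x r, V y ^ q) ^ (1/q) := by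
    rw [← Real.mul_rpow hb_pos.le (by positivity), ← mul_assoc, mul_inv_cancel₀ hb_pos.ne',
      one_mul]
  have hstep2 : (∫ y in ball x r, V y ^ q) ^ (1/q)
      ≤ C * b ^ (1/q - (1:ℝ)) * ∫ y in ball x r, V y := by
    rw [hsplit]
    calc b ^ (1/q : ℝ) * (b⁻¹ * ∫ y in ball x r, V y ^ q) ^ (1/q)
        ≤ b ^ (1/q : ℝ) * (C * (b⁻¹ * ∫ y in ball x r, V y)) := by
          apply mul_le_mul_of_nonneg_left hRHx (Real.rpow_nonneg hb_pos.le _)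
      _ = C * b ^ (1/q - (1:ℝ)) * ∫ y in ball x r, V y := by
          rw [Real.rpow_sub hb_pos, Real.rpow_one]
          field_simp
  have hS_nonneg : (0:ℝ) ≤ (volume S).toReal ^ (1 - 1/q) :=
    Real.rpow_nonneg ENNReal.toReal_nonneg _
  calc ∫ y in S, V y
      ≤ (∫ y in S, V y ^ q) ^ (1/q) * (volume S).toReal ^ (1 - 1/q) := hold
    _ ≤ (C * b ^ (1/q - (1:ℝ)) * ∫ y in ball x r, V y) * (volume S).toReal ^ (1 - 1/q) := by
        apply mul_le_mul_of_nonneg_right (le_trans hstep1 hstep2) hS_nonneg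
    _ = C * ((volume S).toReal ^ (1 - 1/q)) * (b ^ (1/q - (1:ℝ))) * ∫ y in ball x r, V y := by
        ring

/-- A reverse Hölder weight is doubling (in the following dilated form). -/
lemma doubling (n : ℕ) (hn : 1 ≤ n) (q : ℝ) (hq1 : 1 < q) (V : E n → ℝ)
    (hpos : ∀ x, 0 ≤ V x) (hmeas : Measurable V)
    (hint : ∀ (x : E n) (r : ℝ), 0 < r → IntegrableOn V (ball x r) volume)
    (hqint : ∀ (x : E n) (r : ℝ), 0 < r → IntegrableOn (fun y => V y ^ q) (ball x r) volume)
    (C : ℝ) (hC1 : 1 ≤ C)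
    (hRH : ∀ (x : E n) (r : ℝ), 0 < r →
      ((volume (ball x r)).toReal⁻¹ * ∫ y in ball x r, V y ^ q) ^ (1 / q) ≤
        C * ((volume (ball x r)).toReal⁻¹ * ∫ y in ball x r, V y)) :
    ∃ t : ℝ, 1 < t ∧ ∀ (x : E n) (r : ℝ), 0 < r →
      ∫ y in ball x (t * r), V y ≤ 2 * ∫ y in ball x r, V y := by
  have hq0 : 0 < q := lt_trans one_pos hq1
  set p : ℝ := 1 - 1/q with hp
  have hp0 : 0 < p := by
    have : 1/q < 1 := by rw [div_lt_one hq0]; exact hq1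
    have h1 : 1/q < 1 := this
    simp only [hp, sub_pos]
    exact h1
  have h2C : (1:ℝ) < 2 * C := by linarith
  set θ : ℝ := (2*C) ^ (-(1/p)) with hθ
  have hθ0 : 0 < θ := Real.rpow_pos_of_pos (by linarith) _
  have hθ1 : θ < 1 := Real.rpow_lt_one_of_one_lt_of_neg h2C (by
    rw [neg_lt, neg_zero]; positivity)
  have hθp : θ ^ p = (2*C)⁻¹ := by
    rw [hθ, ← Real.rpow_mul (by linarith : (0:ℝ) ≤ 2*C), neg_mul,
      one_div, inv_mul_cancel₀ hp0.ne', Real.rpow_neg_one]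
  have h1θ0 : 0 < 1 - θ := by linarith
  set t : ℝ := (1 - θ) ^ (-(1/(n:ℝ))) with ht
  have hn0 : (0:ℝ) < (n:ℝ) := by exact_mod_cast hn
  have ht1 : 1 < t := by
    rw [ht]
    rw [Real.one_lt_rpow_iff_of_pos h1θ0]
    right
    constructor
    · linarith
    · rw [neg_lt, neg_zero]; positivity
  have ht0 : 0 < t := lt_trans one_pos ht1
  have htn : t ^ (n:ℕ) = (1 - θ)⁻¹ := by
    rw [ht, ← Real.rpow_natCast ((1 - θ) ^ (-(1/(n:ℝ)))) n,
      ← Real.rpow_mul h1θ0.le, neg_mul, one_div, inv_mul_cancel₀ hn0.ne',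
      Real.rpow_neg_one]
  have htn1 : (1:ℝ) < t ^ (n:ℕ) := one_lt_pow₀ ht1 (by omega)
  refine ⟨t, ht1, fun x r hr => ?_⟩
  have htr : 0 < t * r := by positivity
  have hsub : ball x r ⊆ ball x (t * r) :=
    ball_subset_ball (by nlinarith)
  set S : Set (E n) := ball x (t*r) \ ball x r with hS
  have hSm : MeasurableSet S := measurableSet_ball.diff measurableSet_ball
  have hSs : S ⊆ ball x (t*r) := Set.diff_subset
  have hfr : Module.finrank ℝ (E n) = n := finrank_euclideanSpace_fin
  have hvol_big : volume (ball x (t*r)) = ENNReal.ofReal (t ^ (n:ℕ)) * volume (ball (0:E n) r) := by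
    rw [Measure.addHaar_ball_mul_of_pos volume x ht0, hfr]
  have hvol_small : volume (ball x r) = volume (ball (0:E n) r) :=
    Measure.addHaar_ball_center volume x r
  set c : ℝ := (volume (ball (0:E n) r)).toReal with hc
  have hc0 : 0 < c :=
    ENNReal.toReal_pos (measure_ball_pos volume _ hr).ne' measure_ball_lt_top.ne
  have hball0_fin : volume (ball (0:E n) r) ≠ ⊤ := measure_ball_lt_top.ne
  have hb_big : (volume (ball x (t*r))).toReal = t ^ (n:ℕ) * c := by
    rw [hvol_big, ENNReal.toReal_mul, ENNReal.toReal_ofReal (by positivity)]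
  have hb_small : (volume (ball x r)).toReal = c := by rw [hvol_small]
  have hvolS : (volume S).toReal = (t ^ (n:ℕ) - 1) * c := by
    rw [hS, measure_diff hsub measurableSet_ball.nullMeasurableSet
      (by rw [hvol_small]; exact hball0_fin),
      ENNReal.toReal_sub_of_le (measure_mono hsub) measure_ball_lt_top.ne,
      hb_big, hb_small]
    ring
  have hratio : ((volume S).toReal ^ (1 - 1/q)) * ((volume (ball x (t*r))).toReal ^ (1/q - (1:ℝ)))
      = (2*C)⁻¹ := by
    have h1 : (1/q - (1:ℝ)) = -p := by rw [hp]; ring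
    have h3 : (1 - 1/q) = p := hp.symm
    have h2 : ((t ^ (n:ℕ) - 1) * c) / (t ^ (n:ℕ) * c) = θ := by
      rw [mul_div_mul_right _ _ hc0.ne', htn]
      field_simp
      ring
    rw [hvolS, hb_big, h1, h3, Real.rpow_neg (by positivity), ← div_eq_mul_inv,
      ← Real.div_rpow (by nlinarith) (by positivity), h2, hθp]
  have hest := subset_est n q hq1 V hpos hmeas hint hqint C hRH x (t*r) htr S hSm hSs
  rw [mul_assoc C, hratio] at hest
  have hbig_int : IntegrableOn V (ball x (t*r)) volume := hint x (t*r) htr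
  have hsplit : ∫ y in ball x (t*r), V y = (∫ y in ball x r, V y) + ∫ y in S, V y := by
    rw [hS, ← setIntegral_union (Set.disjoint_sdiff_right) (measurableSet_ball.diff measurableSet_ball)
      (hbig_int.mono_set hsub) (hbig_int.mono_set Set.diff_subset),
      Set.union_diff_cancel hsub]
  have hCinv : C * (2*C)⁻¹ = 1/2 := by
    field_simp
  rw [hCinv] at hest
  linarith [hest, hsplit.le, hsplit.ge]

/-- If `n ≥ 3` and `V ∈ RH_q(ℝⁿ)`, `q ∈ (n/2, ∞)`, `V` not a.e. zero, then there exist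
`C, k₀ > 0` such that for every `x` and every `R > 0` with `R·m(x,V) ≥ 1`,
`(1/R^(n-2)) ∫_{B(x,R)} V ≤ C (R·m(x,V))^{k₀}`. -/
theorem stmt1 (n : ℕ) (hn : 3 ≤ n) (q : ℝ) (hq : (n : ℝ) / 2 < q)
    (V : E n → ℝ) (hV : IsRH n q V) (hV0 : ¬ V =ᵐ[volume] 0) :
    ∃ C > 0, ∃ k₀ : ℝ, 0 < k₀ ∧ ∀ (x : E n) (R : ℝ), 0 < R → 1 ≤ R * auxm n V x →
      (1 / R ^ ((n : ℝ) - 2)) * ∫ y in ball x R, V y ≤ C * (R * auxm n V x) ^ k₀ := by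
  obtain ⟨hpos, hmeas, hint, hqint, C₁, hC₁, hRH₁⟩ := hV
  have hn3 : (3:ℝ) ≤ (n:ℝ) := by exact_mod_cast hn
  have hq1 : 1 < q := by linarith
  set C₂ : ℝ := max C₁ 1 with hC₂def
  have hC₂1 : 1 ≤ C₂ := le_max_right _ _
  have hRH : ∀ (x : E n) (r : ℝ), 0 < r →
      ((volume (ball x r)).toReal⁻¹ * ∫ y in ball x r, V y ^ q) ^ (1 / q) ≤
        C₂ * ((volume (ball x r)).toReal⁻¹ * ∫ y in ball x r, V y) := by
    intro x r hr
    refine le_trans (hRH₁ x r hr) ?_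
    apply mul_le_mul_of_nonneg_right (le_max_left _ _)
    have h0 : 0 ≤ ∫ y in ball x r, V y := setIntegral_nonneg measurableSet_ball fun y _ => hpos y
    positivity
  obtain ⟨t, ht1, hdouble⟩ := doubling n (by omega) q hq1 V hpos hmeas hint hqint C₂ hC₂1 hRH
  have ht0 : 0 < t := lt_trans one_pos ht1
  have hlogt : 0 < Real.log t := Real.log_pos ht1
  set k₀ : ℝ := Real.log 2 / Real.log t with hk₀def
  have hk₀ : 0 < k₀ := div_pos (Real.log_pos one_lt_two) hlogt
  have htk : t ^ k₀ = 2 := by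
    rw [Real.rpow_def_of_pos ht0, hk₀def]
    have h1 : Real.log t * (Real.log 2 / Real.log t) = Real.log 2 := by
      field_simp
    rw [h1, Real.exp_log two_pos]
  -- iterated doubling
  have hiter : ∀ (k : ℕ) (x : E n) (r : ℝ), 0 < r →
      ∫ y in ball x (t^k * r), V y ≤ 2^k * ∫ y in ball x r, V y := by
    intro k
    induction k with
    | zero => intro x r hr; simp
    | succ k ih =>
      intro x r hr
      have h1 : t^(k+1) * r = t * (t^k * r) := by ring
      rw [h1]
      calc ∫ y in ball x (t * (t^k * r)), V y
          ≤ 2 * ∫ y in ball x (t^k * r), V y := hdouble x _ (by positivity)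
        _ ≤ 2 * (2^k * ∫ y in ball x r, V y) := by
            apply mul_le_mul_of_nonneg_left (ih x r hr) (by norm_num)
        _ = 2^(k+1) * ∫ y in ball x r, V y := by ring
  refine ⟨2, by norm_num, k₀, hk₀, fun x R hR hRm => ?_⟩
  simp only [auxm] at hRm ⊢
  set ρ : ℝ := sSup (auxSet n V x) with hρdef
  have hρ0 : 0 < ρ := by
    by_contra h
    push_neg at h
    have h1 : ρ⁻¹ ≤ 0 := inv_nonpos.mpr h
    have h2 : R * ρ⁻¹ ≤ 0 := mul_nonpos_of_nonneg_of_nonpos hR.le h1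
    linarith
  have hne : (auxSet n V x).Nonempty := by
    by_contra h
    rw [Set.not_nonempty_iff_eq_empty] at h
    rw [hρdef, h, Real.sSup_empty] at hρ0
    exact lt_irrefl 0 hρ0
  have hbdd : BddAbove (auxSet n V x) := by
    by_contra h
    rw [hρdef, Real.sSup_of_not_bddAbove h] at hρ0
    exact lt_irrefl 0 hρ0
  have hρR : ρ ≤ R := by
    rw [← div_eq_mul_inv] at hRm
    exact (one_le_div hρ0).mp hRm
  have hexp0 : (0:ℝ) ≤ (n:ℝ) - 2 := by linarith
  -- integral bound at radii below ρ
  have key : ∀ r : ℝ, r < ρ → ∫ y in ball x r, V y ≤ ρ ^ ((n:ℝ) - 2) := by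
    intro r hrρ
    obtain ⟨a, haset, har⟩ := exists_lt_of_lt_csSup hne (by rw [← hρdef]; exact hrρ)
    have haρ : a ≤ ρ := le_csSup hbdd haset
    obtain ⟨ha0, hineq⟩ := haset
    have hpow : (0:ℝ) < a ^ ((2:ℝ) - n) := Real.rpow_pos_of_pos ha0 _
    have hIa : ∫ y in ball x a, V y ≤ a ^ ((n:ℝ) - 2) := by
      have h2 : ∫ y in ball x a, V y ≤ (a ^ ((2:ℝ) - n))⁻¹ := by
        rw [← mul_one (a ^ ((2:ℝ) - n))⁻¹]
        calc ∫ y in ball x a, V y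
            = (a ^ ((2:ℝ) - n))⁻¹ * (a ^ ((2:ℝ) - n) * ∫ y in ball x a, V y) := by
              field_simp
          _ ≤ (a ^ ((2:ℝ) - n))⁻¹ * 1 :=
              mul_le_mul_of_nonneg_left hineq (inv_nonneg.mpr hpow.le)
      rw [← Real.rpow_neg ha0.le, neg_sub] at h2
      exact h2
    have hmono : ∫ y in ball x r, V y ≤ ∫ y in ball x a, V y := by
      apply setIntegral_mono_set (hint x a ha0)
        (Filter.Eventually.of_forall fun y => hpos y)
        (HasSubset.Subset.eventuallyLE (ball_subset_ball har.le))
    calc ∫ y in ball x r, V y ≤ ∫ y in ball x a, V y := hmono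
      _ ≤ a ^ ((n:ℝ) - 2) := hIa
      _ ≤ ρ ^ ((n:ℝ) - 2) := Real.rpow_le_rpow ha0.le haρ hexp0
  -- integral bound at radius ρ via monotone convergence
  have hIρ : ∫ y in ball x ρ, V y ≤ ρ ^ ((n:ℝ) - 2) := by
    set s : ℕ → Set (E n) := fun k => ball x (ρ - ρ/((k:ℝ)+2)) with hs
    have hsm : ∀ k, MeasurableSet (s k) := fun k => measurableSet_ball
    have hmono : Monotone s := by
      intro i j hij
      apply ball_subset_ball
      have h1 : ρ / ((j:ℝ)+2) ≤ ρ / ((i:ℝ)+2) := by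
        apply div_le_div_of_nonneg_left hρ0.le (by positivity)
        have : (i:ℝ) ≤ (j:ℝ) := by exact_mod_cast hij
        linarith
      linarith
    have hunion : (⋃ k, s k) = ball x ρ := by
      ext y
      simp only [hs, Set.mem_iUnion, mem_ball]
      constructor
      · rintro ⟨k, hk⟩
        have h1 : (0:ℝ) < ρ/((k:ℝ)+2) := by positivity
        linarith
      · intro hy
        obtain ⟨k, hk⟩ := exists_nat_gt (ρ / (ρ - dist y x))
        refine ⟨k, ?_⟩
        have hε : 0 < ρ - dist y x := by linarith
        rw [div_lt_iff₀ hε] at hk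
        have hk2 : (0:ℝ) < (k:ℝ) + 2 := by positivity
        have h2 : ρ / ((k:ℝ)+2) < ρ - dist y x := by
          rw [div_lt_iff₀ hk2]
          nlinarith [dist_nonneg (x := y) (y := x)]
        linarith
    have htend := tendsto_setIntegral_of_monotone hsm hmono (by rw [hunion]; exact hint x ρ hρ0)
    rw [hunion] at htend
    refine le_of_tendsto htend (Filter.Eventually.of_forall fun k => ?_)
    apply key
    have h1 : (0:ℝ) < ρ/((k:ℝ)+2) := by positivity
    linarith
  -- choose the doubling iteration count
  have hRρ1 : 1 ≤ R / ρ := (one_le_div hρ0).mpr hρR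
  have hex : ∃ k : ℕ, R / ρ < t ^ k := pow_unbounded_of_one_lt _ ht1
  set K : ℕ := Nat.find hex with hKdef
  have hK : R / ρ < t ^ K := Nat.find_spec hex
  have hK0 : K ≠ 0 := by
    intro h
    rw [h, pow_zero] at hK
    linarith
  obtain ⟨m, hm⟩ : ∃ m, K = m + 1 := ⟨K - 1, (Nat.succ_pred_eq_of_pos (Nat.pos_of_ne_zero hK0)).symm⟩
  have hmin : ¬ (R / ρ < t ^ m) := Nat.find_min hex (by omega)
  push_neg at hmin
  -- hmin : t ^ m ≤ R / ρ
  have hRle : R ≤ t ^ K * ρ := by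
    rw [div_lt_iff₀ hρ0] at hK
    exact hK.le
  have htK0 : 0 < t ^ K * ρ := by positivity
  have hIR : ∫ y in ball x R, V y ≤ 2 ^ K * ρ ^ ((n:ℝ) - 2) := by
    calc ∫ y in ball x R, V y
        ≤ ∫ y in ball x (t ^ K * ρ), V y := by
          apply setIntegral_mono_set (hint x _ htK0)
            (Filter.Eventually.of_forall fun y => hpos y)
            (HasSubset.Subset.eventuallyLE (ball_subset_ball hRle))
      _ ≤ 2 ^ K * ∫ y in ball x ρ, V y := hiter K x ρ hρ0
      _ ≤ 2 ^ K * ρ ^ ((n:ℝ) - 2) := by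
          apply mul_le_mul_of_nonneg_left hIρ (by positivity)
  have h2m : (2:ℝ) ^ m ≤ (R / ρ) ^ k₀ := by
    have h1 : ((t ^ m : ℝ)) ^ k₀ ≤ (R / ρ) ^ k₀ :=
      Real.rpow_le_rpow (by positivity) hmin hk₀.le
    have h2 : ((t ^ m : ℝ)) ^ k₀ = (2:ℝ) ^ m := by
      rw [← Real.rpow_natCast t m, ← Real.rpow_mul ht0.le, mul_comm,
        Real.rpow_mul ht0.le, htk, Real.rpow_natCast]
    rw [← h2]
    exact h1
  have hRpow : 0 < R ^ ((n:ℝ) - 2) := Real.rpow_pos_of_pos hR _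
  rw [← div_eq_mul_inv, one_div, ← div_eq_inv_mul, div_le_iff₀ hRpow]
  have hρpow : ρ ^ ((n:ℝ) - 2) ≤ R ^ ((n:ℝ) - 2) := Real.rpow_le_rpow hρ0.le hρR hexp0
  calc ∫ y in ball x R, V y
      ≤ 2 ^ K * ρ ^ ((n:ℝ) - 2) := hIR
    _ = 2 * (2:ℝ) ^ m * ρ ^ ((n:ℝ) - 2) := by rw [hm]; ring
    _ ≤ 2 * (R / ρ) ^ k₀ * ρ ^ ((n:ℝ) - 2) := by
        apply mul_le_mul_of_nonneg_right _ (Real.rpow_nonneg hρ0.le _)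
        apply mul_le_mul_of_nonneg_left h2m (by norm_num)
    _ ≤ 2 * (R / ρ) ^ k₀ * R ^ ((n:ℝ) - 2) := by
        apply mul_le_mul_of_nonneg_left hρpow
        positivity

end
end

section
/- Let n ≥ 3 and let V ∈ RH_q(ℝⁿ) with q ∈ (n/2, ∞), V not almost everywhere zero. Then for every x ∈ ℝⁿ the set S_x := { r > 0 : r^{2−n} ∫_{B(x,r)} V(y) dy ≤ 1 } is nonempty and bounded above; consequently the auxiliary function m(x,V), defined by 1/m(x,V) := sup S_x, satisfies 0 < m(x,V) < ∞ for every x ∈ ℝⁿ. -/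
open MeasureTheory Metric ENNReal

noncomputable section

lemma vol_ball (n : ℕ) (hn : 0 < n) (x : E n) (ρ : ℝ) (hρ : 0 < ρ) :
    (volume (ball x ρ)).toReal = ρ ^ (n:ℝ) * (volume (ball (0:E n) 1)).toReal := by
  haveI : Nontrivial (E n) := by
    apply Module.nontrivial_of_finrank_pos (R := ℝ)
    rw [finrank_euclideanSpace, Fintype.card_fin]; exact hn
  rw [Measure.addHaar_ball (μ := volume) x hρ.le, ENNReal.toReal_mul,
    ENNReal.toReal_ofReal (by positivity), finrank_euclideanSpace, Fintype.card_fin,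
    Real.rpow_natCast]

lemma vol_ball_pos (n : ℕ) (x : E n) (ρ : ℝ) (hρ : 0 < ρ) :
    0 < (volume (ball x ρ)).toReal :=
  ENNReal.toReal_pos (measure_ball_pos volume x hρ).ne' measure_ball_lt_top.ne

lemma holder_aux (n : ℕ) (q : ℝ) (hq1 : 1 < q) (V : E n → ℝ)
    (h0 : ∀ x, 0 ≤ V x) (hm : Measurable V)
    (hintq : ∀ (x : E n) (r : ℝ), 0 < r → IntegrableOn (fun y => V y ^ q) (ball x r) volume)
    (x : E n) (r : ℝ) (hr : 0 < r) :
    ∫ y in ball x r, V y ≤ (∫ y in ball x r, V y ^ q) ^ (1/q) *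
      ((volume (ball x r)).toReal) ^ (1 - 1/q) := by
  have hqpos : 0 < q := lt_trans one_pos hq1
  set μ' := volume.restrict (ball x r) with hμ'
  haveI hfin : IsFiniteMeasure μ' := ⟨by
    rw [hμ', Measure.restrict_apply_univ]; exact measure_ball_lt_top⟩
  have hpq : q.HolderConjugate (Real.conjExponent q) := Real.HolderConjugate.conjExponent hq1
  have hVq : Integrable (fun y => V y ^ q) μ' := hintq x r hr
  have hmemV : MemLp V (ENNReal.ofReal q) μ' := by
    have hq0 : ENNReal.ofReal q ≠ 0 := by
      simp [ENNReal.ofReal_eq_zero, not_le, hqpos]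
    have hL : MemLp (fun y => ‖V y‖ ^ (ENNReal.ofReal q).toReal)
        (ENNReal.ofReal q / ENNReal.ofReal q) μ' := by
      rw [ENNReal.div_self hq0 ENNReal.ofReal_ne_top, ENNReal.toReal_ofReal hqpos.le,
        memLp_one_iff_integrable]
      exact hVq.congr (Filter.Eventually.of_forall fun y => by
        simp [Real.norm_of_nonneg (h0 y)])
    exact (memLp_norm_rpow_iff hm.aestronglyMeasurable hq0 ENNReal.ofReal_ne_top).mp hL
  have hmem1 : MemLp (fun _ : E n => (1:ℝ)) (ENNReal.ofReal (Real.conjExponent q)) μ' :=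
    memLp_const 1
  have H := integral_mul_le_Lp_mul_Lq_of_nonneg hpq
    (Filter.Eventually.of_forall h0) (Filter.Eventually.of_forall fun _ => zero_le_one)
    hmemV hmem1
  simp only [mul_one, Real.one_rpow, integral_const, smul_eq_mul] at H
  rw [measureReal_def, Measure.restrict_apply_univ] at H
  have hconj : 1 / Real.conjExponent q = 1 - 1/q := by
    have := hpq.inv_add_inv_eq_one
    have h2 := hpq.symm.pos
    field_simp at this ⊢
    linarith
  rw [hconj] at H
  exact H

lemma key (n : ℕ) (hn : 0 < n) (q : ℝ) (hq1 : 1 < q) (V : E n → ℝ)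
    (h0 : ∀ x, 0 ≤ V x) (hm : Measurable V)
    (hintq : ∀ (x : E n) (r : ℝ), 0 < r → IntegrableOn (fun y => V y ^ q) (ball x r) volume)
    (C : ℝ) (hC : 0 < C)
    (hRH : ∀ (x : E n) (r : ℝ), 0 < r →
      ((volume (ball x r)).toReal⁻¹ * ∫ y in ball x r, V y ^ q) ^ (1 / q) ≤
        C * ((volume (ball x r)).toReal⁻¹ * ∫ y in ball x r, V y))
    (x : E n) (r R : ℝ) (hr : 0 < r) (hrR : r ≤ R) :
    ∫ y in ball x r, V y ≤ C * (r/R) ^ ((n:ℝ) - (n:ℝ)/q) * ∫ y in ball x R, V y := by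
  have hqpos : 0 < q := lt_trans one_pos hq1
  have hR : 0 < R := hr.trans_le hrR
  have hIq : 0 ≤ ∫ y in ball x R, V y ^ q :=
    setIntegral_nonneg measurableSet_ball (fun y _ => Real.rpow_nonneg (h0 y) q)
  have hI : 0 ≤ ∫ y in ball x R, V y :=
    setIntegral_nonneg measurableSet_ball (fun y _ => h0 y)
  have hvr := vol_ball_pos n x r hr
  have hvR := vol_ball_pos n x R hR
  -- step 1: Hölder at r
  have h1 := holder_aux n q hq1 V h0 hm hintq x r hr
  -- step 2: monotone in ball
  have h2 : ∫ y in ball x r, V y ^ q ≤ ∫ y in ball x R, V y ^ q :=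
    setIntegral_mono_set (hintq x R hR)
      (Filter.Eventually.of_forall fun y => Real.rpow_nonneg (h0 y) q)
      (HasSubset.Subset.eventuallyLE (ball_subset_ball hrR))
  -- step 3: RH at R rearranged
  have h3 : (∫ y in ball x R, V y ^ q) ^ (1/q) ≤
      (volume (ball x R)).toReal ^ (1/q) *
        (C * ((volume (ball x R)).toReal⁻¹ * ∫ y in ball x R, V y)) := by
    have heq : (∫ y in ball x R, V y ^ q) ^ (1/q)
        = (volume (ball x R)).toReal ^ (1/q) *
          (((volume (ball x R)).toReal⁻¹ * ∫ y in ball x R, V y ^ q) ^ (1/q)) := by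
      rw [Real.mul_rpow (by positivity) hIq, ← mul_assoc,
        ← Real.mul_rpow hvR.le (by positivity), mul_inv_cancel₀ hvR.ne', Real.one_rpow, one_mul]
    rw [heq]
    exact mul_le_mul_of_nonneg_left (hRH x R hR) (Real.rpow_nonneg hvR.le _)
  -- combine
  have hIqr : 0 ≤ ∫ y in ball x r, V y ^ q :=
    setIntegral_nonneg measurableSet_ball (fun y _ => Real.rpow_nonneg (h0 y) q)
  have h4 : ∫ y in ball x r, V y ≤
      ((volume (ball x R)).toReal ^ (1/q) *
        (C * ((volume (ball x R)).toReal⁻¹ * ∫ y in ball x R, V y))) *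
      ((volume (ball x r)).toReal) ^ (1 - 1/q) :=
    h1.trans (mul_le_mul_of_nonneg_right
      (le_trans (Real.rpow_le_rpow hIqr h2 (by positivity)) h3)
      (Real.rpow_nonneg hvr.le _))
  -- now pure algebra
  refine h4.trans_eq ?_
  rw [vol_ball n hn x r hr, vol_ball n hn x R hR]
  set c := (volume (ball (0:E n) 1)).toReal with hc
  have hcpos : 0 < c := by
    have := vol_ball_pos n (0:E n) 1 one_pos
    rw [vol_ball n hn (0:E n) 1 one_pos, Real.one_rpow, one_mul] at this
    exact this
  set I := ∫ y in ball x R, V y with hI'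
  have e1 : ((R:ℝ) ^ (n:ℝ) * c) ^ (1/q) = R ^ ((n:ℝ)/q) * c ^ (1/q) := by
    rw [Real.mul_rpow (by positivity) hcpos.le, ← Real.rpow_mul hR.le]
    ring_nf
  have e2 : ((r:ℝ) ^ (n:ℝ) * c) ^ (1-1/q) = r ^ ((n:ℝ) - (n:ℝ)/q) * c ^ (1-1/q) := by
    rw [Real.mul_rpow (by positivity) hcpos.le, ← Real.rpow_mul hr.le]
    congr 1
    field_simp
  have eF : r ^ ((n:ℝ) - (n:ℝ)/q) = (r/R) ^ ((n:ℝ) - (n:ℝ)/q) * R ^ ((n:ℝ) - (n:ℝ)/q) := by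
    rw [← Real.mul_rpow (div_nonneg hr.le hR.le) hR.le, div_mul_cancel₀ _ hR.ne']
  have ec2 : c ^ (1/q) * c ^ (1-1/q) * c⁻¹ = 1 := by
    rw [← Real.rpow_add hcpos]
    norm_num [mul_inv_cancel₀ hcpos.ne']
  have e4 : R ^ ((n:ℝ)/q) * (R ^ (n:ℝ))⁻¹ * R ^ ((n:ℝ) - (n:ℝ)/q) = 1 := by
    rw [← Real.rpow_neg hR.le, ← Real.rpow_add hR, ← Real.rpow_add hR]
    have h0' : (n:ℝ)/q + -(n:ℝ) + ((n:ℝ) - (n:ℝ)/q) = 0 := by ring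
    rw [h0', Real.rpow_zero]
  rw [e1, e2, mul_inv, eF]
  linear_combination (C * I * ((r/R) ^ ((n:ℝ) - (n:ℝ)/q)) * R ^ ((n:ℝ) - (n:ℝ)/q) *
      (R ^ ((n:ℝ)/q)) * (R ^ (n:ℝ))⁻¹) * ec2 +
    (C * I * ((r/R) ^ ((n:ℝ) - (n:ℝ)/q))) * e4

lemma exists_ball_pos (n : ℕ) (V : E n → ℝ) (h0 : ∀ x, 0 ≤ V x)
    (hint : ∀ (x : E n) (r : ℝ), 0 < r → IntegrableOn V (ball x r) volume)
    (hV0 : ¬ V =ᵐ[volume] 0) (x : E n) :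
    ∃ k : ℕ, 0 < ∫ y in ball x ((k:ℝ)+1), V y := by
  by_contra h
  push_neg at h
  apply hV0
  have hzero : ∀ k : ℕ, ∀ᵐ y, y ∈ ball x ((k:ℝ)+1) → V y = 0 := by
    intro k
    have hintk := hint x ((k:ℝ)+1) (by positivity)
    have hz : ∫ y in ball x ((k:ℝ)+1), V y = 0 :=
      le_antisymm (h k) (setIntegral_nonneg measurableSet_ball fun y _ => h0 y)
    have := (integral_eq_zero_iff_of_nonneg h0 hintk).mp hz
    exact (ae_restrict_iff' measurableSet_ball).mp this
  have hall := ae_all_iff.mpr hzero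
  filter_upwards [hall] with y hy
  have : dist y x < (⌈dist y x⌉₊ : ℝ) + 1 :=
    lt_of_le_of_lt (Nat.le_ceil _) (by linarith)
  exact hy ⌈dist y x⌉₊ (mem_ball.mpr this)

/-- If `n ≥ 3` and `V ∈ RH_q(ℝⁿ)`, `q ∈ (n/2, ∞)`, `V` not a.e. zero, then for every `x`
the set `S_x` is nonempty and bounded above; consequently `m(x,V)`, defined by
`1/m(x,V) = sup S_x`, satisfies `0 < m(x,V) < ∞` (in particular `sup S_x > 0`). -/
theorem stmt2 (n : ℕ) (hn : 3 ≤ n) (q : ℝ) (hq : (n : ℝ) / 2 < q)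
    (V : E n → ℝ) (hV : IsRH n q V) (hV0 : ¬ V =ᵐ[volume] 0) :
    ∀ x : E n, (auxSet n V x).Nonempty ∧ BddAbove (auxSet n V x) ∧
      0 < sSup (auxSet n V x) ∧ 0 < auxm n V x := by
  obtain ⟨h0, hm, hint, hintq, C, hC, hRH⟩ := hV
  have hn0 : 0 < n := by omega
  have hn3 : (3:ℝ) ≤ (n:ℝ) := by exact_mod_cast hn
  have hq1 : 1 < q := by nlinarith
  have hqpos : 0 < q := lt_trans one_pos hq1
  have hα : 0 < 2 - (n:ℝ)/q := by
    rw [sub_pos, div_lt_iff₀ hqpos]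
    nlinarith
  intro x
  have hkey := key n hn0 q hq1 V h0 hm hintq C hC hRH x
  -- Nonemptiness
  have hI1 : 0 ≤ ∫ y in ball x 1, V y := setIntegral_nonneg measurableSet_ball fun y _ => h0 y
  set K := C * ∫ y in ball x 1, V y with hK
  have hK0 : 0 ≤ K := mul_nonneg hC.le hI1
  set r : ℝ := min 1 ((1/(K+1)) ^ ((1:ℝ)/(2 - (n:ℝ)/q))) with hrdef
  have hrpos : 0 < r := lt_min one_pos (Real.rpow_pos_of_pos (by positivity) _)
  have hr1 : r ≤ 1 := min_le_left _ _
  have hmem : r ∈ auxSet n V x := by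
    refine ⟨hrpos, ?_⟩
    have h1 := hkey r 1 hrpos hr1
    rw [div_one] at h1
    have h2 : r ^ ((2:ℝ)-(n:ℝ)) * ∫ y in ball x r, V y ≤
        r ^ ((2:ℝ)-(n:ℝ)) * (C * r ^ ((n:ℝ) - (n:ℝ)/q) * ∫ y in ball x 1, V y) :=
      mul_le_mul_of_nonneg_left h1 (Real.rpow_nonneg hrpos.le _)
    have h3 : r ^ ((2:ℝ)-(n:ℝ)) * (C * r ^ ((n:ℝ) - (n:ℝ)/q) * ∫ y in ball x 1, V y)
        = K * r ^ (2 - (n:ℝ)/q) := by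
      rw [hK]
      rw [show r ^ ((2:ℝ)-(n:ℝ)) * (C * r ^ ((n:ℝ) - (n:ℝ)/q) * ∫ y in ball x 1, V y)
        = (C * ∫ y in ball x 1, V y) * (r ^ ((2:ℝ)-(n:ℝ)) * r ^ ((n:ℝ) - (n:ℝ)/q)) by ring,
        ← Real.rpow_add hrpos]
      congr 2
      ring
    have h4 : r ^ (2 - (n:ℝ)/q) ≤ 1/(K+1) := by
      have hle : r ≤ (1/(K+1)) ^ ((1:ℝ)/(2 - (n:ℝ)/q)) := min_le_right _ _
      have := Real.rpow_le_rpow hrpos.le hle hα.le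
      rwa [← Real.rpow_mul (by positivity), one_div_mul_cancel hα.ne', Real.rpow_one] at this
    have h5 : K * r ^ (2 - (n:ℝ)/q) ≤ K * (1/(K+1)) :=
      mul_le_mul_of_nonneg_left h4 hK0
    have h6 : K * (1/(K+1)) ≤ 1 := by
      rw [mul_one_div]
      exact div_le_one_of_le₀ (by linarith) (by positivity)
    calc r ^ ((2:ℝ)-(n:ℝ)) * ∫ y in ball x r, V y ≤ K * r ^ (2 - (n:ℝ)/q) := h2.trans_eq h3
      _ ≤ 1 := h5.trans h6
  -- Boundedness
  obtain ⟨k, hk⟩ := exists_ball_pos n V h0 hint hV0 x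
  set r₀ : ℝ := (k:ℝ)+1 with hr₀def
  have hr₀ : 0 < r₀ := by positivity
  set a := ∫ y in ball x r₀, V y with ha
  set M := C * r₀ ^ ((n:ℝ) - (n:ℝ)/q) / a with hM
  have hMpos : 0 < M := by
    apply div_pos (mul_pos hC (Real.rpow_pos_of_pos hr₀ _)) hk
  have hbdd : BddAbove (auxSet n V x) := by
    refine ⟨max r₀ (M ^ ((1:ℝ)/(2 - (n:ℝ)/q))), ?_⟩
    rintro R ⟨hRpos, hR1⟩
    rcases le_total R r₀ with hle | hge
    · exact le_trans hle (le_max_left _ _)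
    · refine le_trans ?_ (le_max_right _ _)
      have h1 := hkey r₀ R hr₀ hge
      have hIR : ∫ y in ball x R, V y ≤ R ^ ((n:ℝ)-2) := by
        have hpos : 0 < R ^ ((2:ℝ)-(n:ℝ)) := Real.rpow_pos_of_pos hRpos _
        have h' : ∫ y in ball x R, V y ≤ (R ^ ((2:ℝ)-(n:ℝ)))⁻¹ := by
          rw [← one_div, le_div_iff₀ hpos, mul_comm]
          exact hR1
        rw [← Real.rpow_neg hRpos.le] at h'
        rwa [show -((2:ℝ)-(n:ℝ)) = (n:ℝ)-2 by ring] at h'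
      have h2 : a ≤ C * (r₀/R) ^ ((n:ℝ) - (n:ℝ)/q) * R ^ ((n:ℝ)-2) :=
        h1.trans (mul_le_mul_of_nonneg_left hIR
          (mul_nonneg hC.le (Real.rpow_nonneg (by positivity) _)))
      have h3 : C * (r₀/R) ^ ((n:ℝ) - (n:ℝ)/q) * R ^ ((n:ℝ)-2)
          = C * r₀ ^ ((n:ℝ) - (n:ℝ)/q) * (R ^ (2 - (n:ℝ)/q))⁻¹ := by
        rw [Real.div_rpow hr₀.le hRpos.le, div_eq_mul_inv, ← Real.rpow_neg hRpos.le,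
          ← Real.rpow_neg hRpos.le,
          show C * (r₀ ^ ((n:ℝ) - (n:ℝ)/q) * R ^ (-((n:ℝ) - (n:ℝ)/q))) * R ^ ((n:ℝ)-2)
            = C * r₀ ^ ((n:ℝ) - (n:ℝ)/q) * (R ^ (-((n:ℝ) - (n:ℝ)/q)) * R ^ ((n:ℝ)-2)) from by
              ring,
          ← Real.rpow_add hRpos]
        congr 2
        ring
      have hRα : R ^ (2 - (n:ℝ)/q) ≤ M := by
        have h4 : a ≤ C * r₀ ^ ((n:ℝ) - (n:ℝ)/q) * (R ^ (2 - (n:ℝ)/q))⁻¹ := h2.trans_eq h3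
        have hRαpos : 0 < R ^ (2 - (n:ℝ)/q) := Real.rpow_pos_of_pos hRpos _
        rw [hM, le_div_iff₀ hk]
        calc R ^ (2 - (n:ℝ)/q) * a
            ≤ R ^ (2 - (n:ℝ)/q) * (C * r₀ ^ ((n:ℝ) - (n:ℝ)/q) * (R ^ (2 - (n:ℝ)/q))⁻¹) :=
              mul_le_mul_of_nonneg_left h4 hRαpos.le
          _ = C * r₀ ^ ((n:ℝ) - (n:ℝ)/q) := by field_simp
      calc R = (R ^ (2 - (n:ℝ)/q)) ^ ((1:ℝ)/(2 - (n:ℝ)/q)) := by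
            rw [← Real.rpow_mul hRpos.le, mul_one_div_cancel hα.ne', Real.rpow_one]
        _ ≤ M ^ ((1:ℝ)/(2 - (n:ℝ)/q)) :=
            Real.rpow_le_rpow (Real.rpow_nonneg hRpos.le _) hRα (by positivity)
  have hsup : 0 < sSup (auxSet n V x) := lt_of_lt_of_le hrpos (le_csSup hbdd hmem)
  exact ⟨⟨r, hmem⟩, hbdd, hsup, by rw [auxm]; exact inv_pos.mpr hsup⟩

end
end

section
/- Let n ≥ 3 and let V ∈ RH_q(ℝⁿ) with q ∈ (n/2, ∞), V not almost everywhere zero. Then there exists a constant C > 0 such that for every y ∈ ℝⁿ and every R ∈ (0,∞) with R·m(y,V) ≤ 1, one has (1/R^{n−2}) ∫_{B(y,R)} V(x) dx ≤ C (R·m(y,V))^{2 − n/q}; in particular this quantity is bounded by C whenever R·m(y,V) ≤ 1. -/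
open MeasureTheory Metric ENNReal

noncomputable section

lemma vol_pos (n : ℕ) (hn : 3 ≤ n) (y : E n) (r : ℝ) (hr : 0 < r) :
    0 < (volume (ball y r)).toReal :=
  ENNReal.toReal_pos (measure_ball_pos volume y hr).ne' measure_ball_lt_top.ne

lemma vol_ratio (n : ℕ) (hn : 3 ≤ n) (y : E n) (r r' : ℝ) (hr : 0 < r) (hr' : 0 < r') :
    (volume (ball y r)).toReal = (r / r') ^ n * (volume (ball y r')).toReal := by
  have h1 : 0 < n := by omega
  have : Nontrivial (E n) := by
    have h : Module.finrank ℝ (E n) = n := finrank_euclideanSpace_fin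
    exact Module.nontrivial_of_finrank_pos (by omega : 0 < Module.finrank ℝ (E n))
  have hb : ∀ s : ℝ, 0 < s → (volume (ball y s)).toReal
      = s ^ n * (volume (ball (0 : E n) 1)).toReal := by
    intro s hs
    rw [Measure.addHaar_ball volume y hs.le, ENNReal.toReal_mul, ENNReal.toReal_ofReal
      (by positivity), finrank_euclideanSpace_fin]
  rw [hb r hr, hb r' hr', div_pow]
  field_simp

lemma memV_ball (n : ℕ) (q : ℝ) (hq1 : 1 < q) (V : E n → ℝ) (hV : IsRH n q V)
    (y : E n) (r : ℝ) (hr : 0 < r) :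
    MemLp V (ENNReal.ofReal q) (volume.restrict (ball y r)) := by
  obtain ⟨hV0, hVm, hVint, hVqint, -⟩ := hV
  have hq0 : (0:ℝ) < q := by linarith
  have hne : ENNReal.ofReal q ≠ 0 := by simp [hq0]
  have hnt : ENNReal.ofReal q ≠ ⊤ := ofReal_ne_top
  have hVsm : AEStronglyMeasurable V (volume.restrict (ball y r)) :=
    hVm.aestronglyMeasurable
  rw [← memLp_norm_rpow_iff hVsm hne hnt, ENNReal.div_self hne hnt,
    memLp_one_iff_integrable]
  have : (fun x => ‖V x‖ ^ (ENNReal.ofReal q).toReal) = fun x => V x ^ q := by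
    funext x
    rw [Real.norm_of_nonneg (hV0 x), ENNReal.toReal_ofReal hq0.le]
  rw [this]
  exact hVqint y r hr

lemma key_ineq (n : ℕ) (hn : 3 ≤ n) (q : ℝ) (hq1 : 1 < q)
    (V : E n → ℝ) (hV : IsRH n q V) :
    ∃ C > 0, ∀ (y : E n) (r r' : ℝ), 0 < r → r ≤ r' →
      ∫ x in ball y r, V x ≤
        C * (r / r') ^ ((n : ℝ) * (1 - 1 / q)) * ∫ x in ball y r', V x := by
  obtain ⟨hV0, hVm, hVint, hVqint, C₀, hC₀, hRH⟩ := hV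
  refine ⟨C₀, hC₀, fun y r r' hr hrr' => ?_⟩
  have hr' : 0 < r' := hr.trans_le hrr'
  have hq0 : (0:ℝ) < q := by linarith
  set νr := (volume (ball y r)).toReal with hνr_def
  set νr' := (volume (ball y r')).toReal with hνr'_def
  have hνr : 0 < νr := vol_pos n hn y r hr
  have hνr' : 0 < νr' := vol_pos n hn y r' hr'
  have hconj : q.HolderConjugate (Real.conjExponent q) :=
    Real.HolderConjugate.conjExponent hq1
  set q' := Real.conjExponent q with hq'_def
  have hinvq' : 1 / q' = 1 - 1 / q := by
    have := hconj.one_sub_inv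
    rw [one_div, one_div, ← this]
  haveI : IsFiniteMeasure (volume.restrict (ball y r)) :=
    ⟨by rw [Measure.restrict_apply_univ]; exact measure_ball_lt_top⟩
  have hmem1 : MemLp V (ENNReal.ofReal q) (volume.restrict (ball y r)) :=
    memV_ball n q hq1 V ⟨hV0, hVm, hVint, hVqint, C₀, hC₀, hRH⟩ y r hr
  have hmem2 : MemLp (fun _ : E n => (1:ℝ)) (ENNReal.ofReal q')
      (volume.restrict (ball y r)) := memLp_const 1
  have hH := integral_mul_le_Lp_mul_Lq_of_nonneg hconj
    (Filter.Eventually.of_forall fun x => hV0 x)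
    (Filter.Eventually.of_forall fun _ => zero_le_one) hmem1 hmem2
  simp only [mul_one, Real.one_rpow] at hH
  rw [integral_const, measureReal_restrict_apply_univ, smul_eq_mul, mul_one] at hH
  -- hH : ∫ x in ball y r, V x ≤ (∫ x in ball y r, V x ^ q) ^ (1/q) * νr ^ (1/q')
  have hIq_nonneg : 0 ≤ ∫ x in ball y r, V x ^ q :=
    setIntegral_nonneg measurableSet_ball fun x _ => Real.rpow_nonneg (hV0 x) q
  have hIq'_nonneg : 0 ≤ ∫ x in ball y r', V x ^ q :=
    setIntegral_nonneg measurableSet_ball fun x _ => Real.rpow_nonneg (hV0 x) q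
  have hI'_nonneg : 0 ≤ ∫ x in ball y r', V x :=
    setIntegral_nonneg measurableSet_ball fun x _ => hV0 x
  have hmono : ∫ x in ball y r, V x ^ q ≤ ∫ x in ball y r', V x ^ q := by
    refine setIntegral_mono_set (hVqint y r' hr')
      (Filter.Eventually.of_forall fun x => Real.rpow_nonneg (hV0 x) q)
      (HasSubset.Subset.eventuallyLE (ball_subset_ball hrr'))
  have hRH' := hRH y r' hr'
  -- (∫_{r'} V^q)^(1/q) ≤ νr'^(1/q) * (C₀ * (νr'⁻¹ * ∫_{r'} V))
  have hsplit : (∫ x in ball y r', V x ^ q) ^ (1/q)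
      = νr' ^ (1/q) * ((νr')⁻¹ * ∫ x in ball y r', V x ^ q) ^ (1/q) := by
    rw [← Real.mul_rpow hνr'.le (by positivity), ← mul_assoc, mul_inv_cancel₀ hνr'.ne',
      one_mul]
  have hstep : (∫ x in ball y r', V x ^ q) ^ (1/q)
      ≤ νr' ^ (1/q) * (C₀ * ((νr')⁻¹ * ∫ x in ball y r', V x)) := by
    rw [hsplit]
    exact mul_le_mul_of_nonneg_left hRH' (Real.rpow_nonneg hνr'.le _)
  have hchain : ∫ x in ball y r, V x
      ≤ νr' ^ (1/q) * (C₀ * ((νr')⁻¹ * ∫ x in ball y r', V x)) * νr ^ (1/q') := by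
    calc ∫ x in ball y r, V x
        ≤ (∫ x in ball y r, V x ^ q) ^ (1/q) * νr ^ (1/q') := hH
      _ ≤ (∫ x in ball y r', V x ^ q) ^ (1/q) * νr ^ (1/q') := by
          gcongr
      _ ≤ _ := by
          gcongr
  -- algebra: νr'^(1/q) * (νr')⁻¹ * νr^(1-1/q) = (r/r')^(n*(1-1/q))
  have halg : νr' ^ (1/q) * (νr')⁻¹ * νr ^ (1 - 1/q)
      = (r / r') ^ ((n:ℝ) * (1 - 1/q)) := by
    have hratio : νr = (r / r') ^ n * νr' := vol_ratio n hn y r r' hr hr'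
    have ht : (0:ℝ) ≤ (r / r') ^ n := by positivity
    rw [hratio, Real.mul_rpow ht hνr'.le]
    have hnpow : ((r / r') ^ n : ℝ) ^ (1 - 1/q) = (r / r') ^ ((n:ℝ) * (1 - 1/q)) := by
      rw [← Real.rpow_natCast (r / r') n, ← Real.rpow_mul (by positivity)]
    rw [hnpow]
    have : νr' ^ (1/q) * (νr')⁻¹ * ((r / r') ^ ((n:ℝ)*(1 - 1/q)) * νr' ^ (1 - 1/q))
        = (r / r') ^ ((n:ℝ)*(1 - 1/q)) * (νr' ^ (1/q) * νr' ^ (1 - 1/q) * (νr')⁻¹) := by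
      ring
    rw [this, ← Real.rpow_add hνr', add_sub_cancel, Real.rpow_one,
      mul_inv_cancel₀ hνr'.ne', mul_one]
  calc ∫ x in ball y r, V x
      ≤ νr' ^ (1/q) * (C₀ * ((νr')⁻¹ * ∫ x in ball y r', V x)) * νr ^ (1/q') := hchain
    _ = C₀ * (νr' ^ (1/q) * (νr')⁻¹ * νr ^ (1 - 1/q)) * ∫ x in ball y r', V x := by
        rw [hinvq']; ring
    _ = C₀ * (r / r') ^ ((n:ℝ) * (1 - 1/q)) * ∫ x in ball y r', V x := by rw [halg]

lemma F_ineq (n : ℕ) (hn : 3 ≤ n) (q : ℝ) (hq1 : 1 < q)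
    (V : E n → ℝ) (hV : IsRH n q V) :
    ∃ C > 0, ∀ (y : E n) (r r' : ℝ), 0 < r → r ≤ r' →
      r ^ ((2:ℝ) - n) * ∫ x in ball y r, V x ≤
        C * (r / r') ^ (2 - (n:ℝ) / q) *
          (r' ^ ((2:ℝ) - n) * ∫ x in ball y r', V x) := by
  obtain ⟨C, hC, hkey⟩ := key_ineq n hn q hq1 V hV
  refine ⟨C, hC, fun y r r' hr hrr' => ?_⟩
  have hr' : 0 < r' := hr.trans_le hrr'
  have h1 := hkey y r r' hr hrr'
  have hI'_nonneg : 0 ≤ ∫ x in ball y r', V x :=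
    setIntegral_nonneg measurableSet_ball fun x _ => (hV.1 x)
  have h2 : r ^ ((2:ℝ) - n) * ∫ x in ball y r, V x
      ≤ r ^ ((2:ℝ) - n) * (C * (r / r') ^ ((n:ℝ) * (1 - 1/q)) * ∫ x in ball y r', V x) := by
    exact mul_le_mul_of_nonneg_left h1 (Real.rpow_nonneg hr.le _)
  refine h2.trans_eq ?_
  have hdiv : (0:ℝ) < r / r' := div_pos hr hr'
  have hsplit : r ^ ((2:ℝ) - n) = (r / r') ^ ((2:ℝ) - n) * r' ^ ((2:ℝ) - n) := by
    rw [Real.div_rpow hr.le hr'.le, div_mul_cancel₀]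
    exact (Real.rpow_pos_of_pos hr' _).ne'
  rw [hsplit]
  have hadd : (r / r') ^ ((2:ℝ) - n) * (r / r') ^ ((n:ℝ) * (1 - 1/q))
      = (r / r') ^ (2 - (n:ℝ) / q) := by
    rw [← Real.rpow_add hdiv]
    congr 1
    field_simp
    ring
  calc (r / r') ^ ((2:ℝ) - n) * r' ^ ((2:ℝ) - n) *
        (C * (r / r') ^ ((n:ℝ) * (1 - 1/q)) * ∫ x in ball y r', V x)
      = C * ((r / r') ^ ((2:ℝ) - n) * (r / r') ^ ((n:ℝ) * (1 - 1/q))) *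
        (r' ^ ((2:ℝ) - n) * ∫ x in ball y r', V x) := by ring
    _ = _ := by rw [hadd]

lemma exists_pos_integral (n : ℕ) (hn : 3 ≤ n) (V : E n → ℝ)
    (hV0 : ∀ x, 0 ≤ V x) (hVint : ∀ (x : E n) (r : ℝ), 0 < r → IntegrableOn V (ball x r) volume)
    (hne : ¬ V =ᵐ[volume] 0) (y : E n) :
    ∃ k : ℕ, 0 < ∫ x in ball y (k + 1 : ℝ), V x := by
  by_contra h
  push_neg at h
  apply hne
  have hzero : ∀ k : ℕ, V =ᵐ[volume.restrict (ball y (k + 1 : ℝ))] 0 := by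
    intro k
    have hint := hVint y (k + 1 : ℝ) (by positivity)
    have hle := h k
    have h0 : ∫ x in ball y (k + 1 : ℝ), V x = 0 :=
      le_antisymm hle (setIntegral_nonneg measurableSet_ball fun x _ => hV0 x)
    exact (integral_eq_zero_iff_of_nonneg_ae
      (Filter.Eventually.of_forall fun x => hV0 x) hint).mp h0
  have hcov : (⋃ k : ℕ, ball y (k + 1 : ℝ)) = Set.univ := by
    ext x
    simp only [Set.mem_iUnion, mem_ball, Set.mem_univ, iff_true]
    obtain ⟨k, hk⟩ := exists_nat_gt (dist x y)
    exact ⟨k, by push_cast; linarith⟩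
  have : V =ᵐ[volume.restrict (⋃ k : ℕ, ball y (k + 1 : ℝ))] 0 := by
    rw [Filter.EventuallyEq]
    rw [ae_restrict_iUnion_iff]
    exact fun k => hzero k
  rwa [hcov, Measure.restrict_univ] at this

lemma auxSet_nonempty (n : ℕ) (hn : 3 ≤ n) (q : ℝ) (hq : (n : ℝ) / 2 < q)
    (V : E n → ℝ) (hV : IsRH n q V) (y : E n) :
    ∃ r : ℝ, 0 < r ∧ r ∈ auxSet n V y := by
  have hq1 : 1 < q := by
    have : (3:ℝ) ≤ n := by exact_mod_cast hn
    linarith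
  have hq0 : (0:ℝ) < q := by linarith
  have hδ : 0 < 2 - (n:ℝ)/q := by
    rw [sub_pos, div_lt_iff₀ hq0]
    linarith [(div_lt_iff₀ (by norm_num : (0:ℝ) < 2)).mp hq]
  obtain ⟨C, hC, hF⟩ := F_ineq n hn q hq1 V hV
  set A := (1:ℝ) ^ ((2:ℝ) - n) * ∫ x in ball y 1, V x with hA_def
  have hA_nonneg : 0 ≤ A := by
    apply mul_nonneg (Real.rpow_nonneg zero_le_one _)
    exact setIntegral_nonneg measurableSet_ball fun x _ => hV.1 x
  set r := min 1 ((1 / (C * A + 1)) ^ (1 / (2 - (n:ℝ)/q))) with hr_def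
  have hbase : (0:ℝ) < 1 / (C * A + 1) := by positivity
  have hr_pos : 0 < r := lt_min one_pos (Real.rpow_pos_of_pos hbase _)
  refine ⟨r, hr_pos, hr_pos, ?_⟩
  have h1 := hF y r 1 hr_pos (min_le_left _ _)
  refine h1.trans ?_
  have hrd : (r / 1 : ℝ) = r := div_one r
  rw [hrd, ← hA_def]
  have hrpow : r ^ (2 - (n:ℝ)/q) ≤ 1 / (C * A + 1) := by
    have h2 : r ≤ (1 / (C * A + 1)) ^ (1 / (2 - (n:ℝ)/q)) := min_le_right _ _
    calc r ^ (2 - (n:ℝ)/q)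
        ≤ ((1 / (C * A + 1)) ^ (1 / (2 - (n:ℝ)/q))) ^ (2 - (n:ℝ)/q) :=
          Real.rpow_le_rpow hr_pos.le h2 hδ.le
      _ = 1 / (C * A + 1) := by
          rw [← Real.rpow_mul hbase.le, one_div_mul_cancel hδ.ne', Real.rpow_one]
  calc C * r ^ (2 - (n:ℝ)/q) * A ≤ C * (1 / (C * A + 1)) * A := by
        gcongr
    _ ≤ 1 := by
        have heq : C * (1 / (C * A + 1)) * A = C * A / (C * A + 1) := by ring
        rw [heq, div_le_one (by positivity)]
        linarith

lemma auxSet_bddAbove (n : ℕ) (hn : 3 ≤ n) (q : ℝ) (hq : (n : ℝ) / 2 < q)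
    (V : E n → ℝ) (hV : IsRH n q V) (hne : ¬ V =ᵐ[volume] 0) (y : E n) :
    BddAbove (auxSet n V y) := by
  have hq1 : 1 < q := by
    have : (3:ℝ) ≤ n := by exact_mod_cast hn
    linarith
  have hq0 : (0:ℝ) < q := by linarith
  have hδ : 0 < 2 - (n:ℝ)/q := by
    rw [sub_pos, div_lt_iff₀ hq0]
    linarith [(div_lt_iff₀ (by norm_num : (0:ℝ) < 2)).mp hq]
  obtain ⟨C, hC, hF⟩ := F_ineq n hn q hq1 V hV
  obtain ⟨k, hk⟩ := exists_pos_integral n hn V hV.1 hV.2.2.1 hne y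
  set r₁ := (k + 1 : ℝ) with hr₁_def
  have hr₁ : (0:ℝ) < r₁ := by positivity
  set c := r₁ ^ ((2:ℝ) - n) * ∫ x in ball y r₁, V x with hc_def
  have hc : 0 < c := mul_pos (Real.rpow_pos_of_pos hr₁ _) hk
  refine ⟨max r₁ (r₁ / ((c / C) ^ (1 / (2 - (n:ℝ)/q)))), fun r' hr' => ?_⟩
  obtain ⟨hr'_pos, hr'_le⟩ := hr'
  rcases le_or_gt r' r₁ with h | h
  · exact h.trans (le_max_left _ _)
  · have h1 := hF y r₁ r' hr₁ h.le
    have hFr' : r₁ ^ ((2:ℝ) - n) * ∫ x in ball y r₁, V x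
        ≤ C * (r₁ / r') ^ (2 - (n:ℝ)/q) := by
      calc r₁ ^ ((2:ℝ) - n) * ∫ x in ball y r₁, V x
          ≤ C * (r₁ / r') ^ (2 - (n:ℝ)/q) *
            (r' ^ ((2:ℝ) - n) * ∫ x in ball y r', V x) := h1
        _ ≤ C * (r₁ / r') ^ (2 - (n:ℝ)/q) * 1 := by
            gcongr
        _ = C * (r₁ / r') ^ (2 - (n:ℝ)/q) := mul_one _
    have hcC : c / C ≤ (r₁ / r') ^ (2 - (n:ℝ)/q) := by
      rw [div_le_iff₀ hC, mul_comm]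
      exact hFr'
    have hbase : (0:ℝ) < r₁ / r' := div_pos hr₁ (hr₁.trans h)
    have h2 : (c / C) ^ (1 / (2 - (n:ℝ)/q)) ≤ r₁ / r' := by
      calc (c / C) ^ (1 / (2 - (n:ℝ)/q))
          ≤ ((r₁ / r') ^ (2 - (n:ℝ)/q)) ^ (1 / (2 - (n:ℝ)/q)) :=
            Real.rpow_le_rpow (by positivity) hcC (by positivity)
        _ = r₁ / r' := by
            rw [← Real.rpow_mul hbase.le, mul_one_div_cancel hδ.ne', Real.rpow_one]
    have hpow_pos : (0:ℝ) < (c / C) ^ (1 / (2 - (n:ℝ)/q)) :=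
      Real.rpow_pos_of_pos (by positivity) _
    have : r' ≤ r₁ / ((c / C) ^ (1 / (2 - (n:ℝ)/q))) := by
      rw [le_div_iff₀ hpow_pos]
      calc r' * (c / C) ^ (1 / (2 - (n:ℝ)/q)) ≤ r' * (r₁ / r') := by gcongr
        _ = r₁ := by field_simp
    exact this.trans (le_max_right _ _)

lemma sSup_auxSet_le (n : ℕ) (hn : 3 ≤ n) (q : ℝ) (hq : (n : ℝ) / 2 < q)
    (V : E n → ℝ) (hV : IsRH n q V) (hne : ¬ V =ᵐ[volume] 0) (y : E n) :
    0 < sSup (auxSet n V y) ∧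
      (sSup (auxSet n V y)) ^ ((2:ℝ) - n) *
        ∫ x in ball y (sSup (auxSet n V y)), V x ≤ 1 := by
  have hn3 : (3:ℝ) ≤ n := by exact_mod_cast hn
  obtain ⟨r₂, hr₂pos, hr₂mem⟩ := auxSet_nonempty n hn q hq V hV y
  have hbdd := auxSet_bddAbove n hn q hq V hV hne y
  set r₀ := sSup (auxSet n V y) with hr₀_def
  have hr₀_pos : 0 < r₀ := hr₂pos.trans_le (le_csSup hbdd hr₂mem)
  have key : ∫ x in ball y r₀, V x ≤ r₀ ^ ((n:ℝ) - 2) := by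
    set S : ℕ → Set (E n) := fun k => ball y (r₀ - 1 / ((k:ℝ) + 1)) with hS_def
    have hmono : Monotone S := by
      intro a b hab
      apply ball_subset_ball
      have : 1 / ((b:ℝ) + 1) ≤ 1 / ((a:ℝ) + 1) := by
        apply one_div_le_one_div_of_le (by positivity)
        exact_mod_cast by omega
      linarith
    have hUnion : (⋃ k, S k) = ball y r₀ := by
      ext x
      simp only [hS_def, Set.mem_iUnion, mem_ball]
      constructor
      · rintro ⟨k, hk⟩
        have : (0:ℝ) < 1 / ((k:ℝ) + 1) := by positivity
        linarith
      · intro hx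
        obtain ⟨k, hk⟩ := exists_nat_one_div_lt (show (0:ℝ) < r₀ - dist x y by linarith)
        exact ⟨k, by linarith⟩
    have htends := tendsto_setIntegral_of_monotone (fun k => measurableSet_ball) hmono
      (by rw [hUnion]; exact hV.2.2.1 y r₀ hr₀_pos)
    rw [hUnion] at htends
    refine le_of_tendsto htends (Filter.Eventually.of_forall fun k => ?_)
    obtain ⟨s, hs_mem, hs_gt⟩ := exists_lt_of_lt_csSup ⟨r₂, hr₂mem⟩
      (show r₀ - 1 / ((k:ℝ) + 1) < r₀ by
        have : (0:ℝ) < 1 / ((k:ℝ) + 1) := by positivity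
        linarith)
    have hs_pos : 0 < s := hs_mem.1
    have hs_le : s ≤ r₀ := le_csSup hbdd hs_mem
    have h1 : ∫ x in S k, V x ≤ ∫ x in ball y s, V x := by
      refine setIntegral_mono_set (hV.2.2.1 y s hs_pos)
        (Filter.Eventually.of_forall fun x => hV.1 x)
        (HasSubset.Subset.eventuallyLE (ball_subset_ball hs_gt.le))
    have hpow : (0:ℝ) < s ^ ((2:ℝ) - n) := Real.rpow_pos_of_pos hs_pos _
    have h2 : ∫ x in ball y s, V x ≤ s ^ ((n:ℝ) - 2) := by
      have hmem2 := hs_mem.2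
      have : ∫ x in ball y s, V x ≤ 1 / s ^ ((2:ℝ) - n) := by
        rw [le_div_iff₀ hpow, mul_comm]
        exact hmem2
      rwa [one_div, ← Real.rpow_neg hs_pos.le, neg_sub] at this
    have h3 : s ^ ((n:ℝ) - 2) ≤ r₀ ^ ((n:ℝ) - 2) :=
      Real.rpow_le_rpow hs_pos.le hs_le (by linarith)
    exact (h1.trans h2).trans h3
  refine ⟨hr₀_pos, ?_⟩
  calc r₀ ^ ((2:ℝ) - n) * ∫ x in ball y r₀, V x
      ≤ r₀ ^ ((2:ℝ) - n) * r₀ ^ ((n:ℝ) - 2) := by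
        gcongr
    _ = 1 := by
        rw [← Real.rpow_add hr₀_pos]
        norm_num

/-- If `n ≥ 3` and `V ∈ RH_q(ℝⁿ)`, `q ∈ (n/2, ∞)`, `V` not a.e. zero, then there exists
`C > 0` such that for every `y` and every `R > 0` with `R·m(y,V) ≤ 1`,
`(1/R^(n-2)) ∫_{B(y,R)} V ≤ C (R·m(y,V))^{2 - n/q}`; in particular this quantity is
bounded by `C` whenever `R·m(y,V) ≤ 1`. -/
theorem stmt3 (n : ℕ) (hn : 3 ≤ n) (q : ℝ) (hq : (n : ℝ) / 2 < q)
    (V : E n → ℝ) (hV : IsRH n q V) (hV0 : ¬ V =ᵐ[volume] 0) :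
    ∃ C > 0, ∀ (y : E n) (R : ℝ), 0 < R → R * auxm n V y ≤ 1 →
      (1 / R ^ ((n : ℝ) - 2)) * ∫ x in ball y R, V x ≤
          C * (R * auxm n V y) ^ (2 - (n : ℝ) / q) ∧
        (1 / R ^ ((n : ℝ) - 2)) * ∫ x in ball y R, V x ≤ C := by
  have hn3 : (3:ℝ) ≤ n := by exact_mod_cast hn
  have hq1 : 1 < q := by linarith
  have hq0 : (0:ℝ) < q := by linarith
  have hδ : 0 < 2 - (n:ℝ)/q := by
    rw [sub_pos, div_lt_iff₀ hq0]
    linarith [(div_lt_iff₀ (by norm_num : (0:ℝ) < 2)).mp hq]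
  obtain ⟨C, hC, hF⟩ := F_ineq n hn q hq1 V hV
  refine ⟨C, hC, fun y R hR hRm => ?_⟩
  obtain ⟨hr₀_pos, hFr₀⟩ := sSup_auxSet_le n hn q hq V hV hV0 y
  set r₀ := sSup (auxSet n V y) with hr₀_def
  have hm_eq : auxm n V y = r₀⁻¹ := rfl
  have hRr₀ : R ≤ r₀ := by
    rw [hm_eq, ← div_eq_mul_inv, div_le_one hr₀_pos] at hRm
    exact hRm
  have hLHS : (1 / R ^ ((n : ℝ) - 2)) * ∫ x in ball y R, V x
      = R ^ ((2:ℝ) - n) * ∫ x in ball y R, V x := by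
    rw [one_div, ← Real.rpow_neg hR.le, neg_sub]
  have hRm_pos : 0 < R * auxm n V y := by
    rw [hm_eq]
    positivity
  have hmain : (1 / R ^ ((n : ℝ) - 2)) * ∫ x in ball y R, V x
      ≤ C * (R * auxm n V y) ^ (2 - (n:ℝ)/q) := by
    rw [hLHS]
    calc R ^ ((2:ℝ) - n) * ∫ x in ball y R, V x
        ≤ C * (R / r₀) ^ (2 - (n:ℝ)/q) *
          (r₀ ^ ((2:ℝ) - n) * ∫ x in ball y r₀, V x) := hF y R r₀ hR hRr₀
      _ ≤ C * (R / r₀) ^ (2 - (n:ℝ)/q) * 1 := by gcongr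
      _ = C * (R * auxm n V y) ^ (2 - (n:ℝ)/q) := by
          rw [mul_one, hm_eq, div_eq_mul_inv]
  refine ⟨hmain, hmain.trans ?_⟩
  have : (R * auxm n V y) ^ (2 - (n:ℝ)/q) ≤ 1 :=
    Real.rpow_le_one hRm_pos.le hRm hδ.le
  calc C * (R * auxm n V y) ^ (2 - (n:ℝ)/q) ≤ C * 1 := by gcongr
    _ = C := mul_one C

end
end
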